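/- Let T₁ and T₂ be trees in which every vertex of T₁ has degree m and every vertex of T₂ has degree n. Let Γ be a torsion-free subgroup of Aut(T₁) × Aut(T₂), acting componentwise on V(T₁)×V(T₂), and assume this action is free and transitive. Fix v₀ = (v₁,v₂), define sh(g) = (d(v₁,g₁v₁), d(v₂,g₂v₂)) for g = (g₁,g₂) ∈ Γ, and set A = {g ∈ Γ : sh(g)=(1,0)}, B = {g ∈ Γ : sh(g)=(0,1)}, and R = {(a,b,b′,a′) ∈ A×B×B×A : a·b = b′·a′ in Γ}. Then: (1) |A| = m and |B| = n; (2) A and B are closed under inversion, and g⁻¹ ≠ g for all g ∈ A ∪ B (so the involution g ↦ g⁻¹ is fixed-point free on A and on B, and in particular m and n are even); (3) if (a,b,b′,a′) ∈ R then (a⁻¹,b′,b,a′⁻¹), (a′⁻¹,b′⁻¹,b⁻¹,a⁻¹) and (a′,b⁻¹,b′⁻¹,a) belong to R; (4) (a,b,b⁻¹,a⁻¹) ∉ R for all a ∈ A, b ∈ B; (5) each of the four projections R → A×B given by (a,b,b′,a′) ↦ (a,b), (a,b′), (a′,b), (a′,b′) is a bijection onto A×B; and (6) A ∪ B generates Γ.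 -/

import Mathlib

private lemma auxIsoDist {V : Type*} {T : SimpleGraph V} (hc : T.Connected) (φ : T ≃g T)
    (u v : V) : T.dist (φ u) (φ v) = T.dist u v := by
  have le : ∀ (ψ : T ≃g T) (u v : V), T.dist (ψ u) (ψ v) ≤ T.dist u v := by
    intro ψ u v
    obtain ⟨p, hp⟩ := hc.exists_walk_length_eq_dist u v
    calc T.dist (ψ u) (ψ v) ≤ (p.map ψ.toHom).length := SimpleGraph.dist_le _
      _ = p.length := SimpleGraph.Walk.length_map _ _
      _ = T.dist u v := hp
  refine le_antisymm (le φ u v) ?_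
  simpa using le φ.symm (φ u) (φ v)

private lemma auxEvenNcard {α : Type*} : ∀ (k : ℕ) (S : Set α) (f : α → α), S.Finite →
    S.ncard = k → (∀ a ∈ S, f a ∈ S) → (∀ a ∈ S, f (f a) = a) → (∀ a ∈ S, f a ≠ a) →
    Even k := by
  intro k
  induction k using Nat.strong_induction_on with
  | _ k ih =>
    intro S f hfin hcard hmem hinv hne
    rcases Nat.eq_zero_or_pos k with hk | hk
    · exact hk ▸ Even.zero
    obtain ⟨a, ha⟩ := (Set.ncard_pos hfin).mp (hcard ▸ hk)
    have hfa := hmem a ha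
    have hne' := hne a ha
    have hpair : ({a, f a} : Set α) ⊆ S := by
      intro x hx
      simp only [Set.mem_insert_iff, Set.mem_singleton_iff] at hx
      rcases hx with rfl | rfl
      exacts [ha, hfa]
    have hk2 : 2 ≤ k := by
      have h2 := Set.ncard_le_ncard hpair hfin
      rwa [Set.ncard_pair (Ne.symm hne'), hcard] at h2
    have hfin' : (S \ {a, f a}).Finite := hfin.diff
    have hcard' : (S \ {a, f a}).ncard = k - 2 := by
      rw [Set.ncard_diff hpair, Set.ncard_pair (Ne.symm hne'), hcard]
    have hmem' : ∀ b ∈ S \ {a, f a}, f b ∈ S \ {a, f a} := by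
      rintro b ⟨hbS, hb⟩
      simp only [Set.mem_insert_iff, Set.mem_singleton_iff, not_or] at hb
      refine ⟨hmem b hbS, ?_⟩
      simp only [Set.mem_insert_iff, Set.mem_singleton_iff, not_or]
      constructor
      · intro h
        apply hb.2
        have h1 := hinv b hbS
        rw [h] at h1
        exact h1.symm
      · intro h
        apply hb.1
        have h1 := hinv b hbS
        rw [h, hinv a ha] at h1
        exact h1.symm
    have hmain := ih (k - 2) (by omega) _ f hfin' hcard'
      hmem' (fun b hb => hinv b hb.1) (fun b hb => hne b hb.1)
    rw [Nat.even_iff] at hmain ⊢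
    omega

/-- A torsion-free group acting freely and transitively on the
vertices of a product of an `m`-regular tree and an `n`-regular tree satisfies
the defining properties of a BM group (VH-datum). -/
theorem torsionfree_simply_transitive_is_BM {V₁ V₂ : Type*}
    (T₁ : SimpleGraph V₁) (T₂ : SimpleGraph V₂)
    (h₁ : T₁.IsTree) (h₂ : T₂.IsTree) (m n : ℕ)
    (hdeg₁ : ∀ v : V₁, (T₁.neighborSet v).ncard = m)
    (hdeg₂ : ∀ v : V₂, (T₂.neighborSet v).ncard = n)
    (Γ : Subgroup ((T₁ ≃g T₁) × (T₂ ≃g T₂)))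
    (htorsionfree : ∀ g ∈ Γ, IsOfFinOrder g → g = 1)
    (hfree : ∀ g ∈ Γ, (∃ u : V₁ × V₂, (g.1 u.1, g.2 u.2) = u) → g = 1)
    (htrans : ∀ u w : V₁ × V₂, ∃ g ∈ Γ, (g.1 u.1, g.2 u.2) = w)
    (v₁ : V₁) (v₂ : V₂)
    (A B : Set ((T₁ ≃g T₁) × (T₂ ≃g T₂)))
    (hA : A = {g | g ∈ Γ ∧ T₁.dist v₁ (g.1 v₁) = 1 ∧ T₂.dist v₂ (g.2 v₂) = 0})
    (hB : B = {g | g ∈ Γ ∧ T₁.dist v₁ (g.1 v₁) = 0 ∧ T₂.dist v₂ (g.2 v₂) = 1})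
    (R : Set (((T₁ ≃g T₁) × (T₂ ≃g T₂)) × ((T₁ ≃g T₁) × (T₂ ≃g T₂)) ×
      ((T₁ ≃g T₁) × (T₂ ≃g T₂)) × ((T₁ ≃g T₁) × (T₂ ≃g T₂))))
    (hR : R = {x | x.1 ∈ A ∧ x.2.1 ∈ B ∧ x.2.2.1 ∈ B ∧ x.2.2.2 ∈ A ∧
      x.1 * x.2.1 = x.2.2.1 * x.2.2.2}) :
    -- (1)
    A.ncard = m ∧ B.ncard = n ∧
    -- (2)
    (∀ g ∈ A, g⁻¹ ∈ A) ∧ (∀ g ∈ B, g⁻¹ ∈ B) ∧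
    (∀ g ∈ A ∪ B, g⁻¹ ≠ g) ∧ Even m ∧ Even n ∧
    -- (3)
    (∀ a b b' a', (a, b, b', a') ∈ R →
      (a⁻¹, b', b, a'⁻¹) ∈ R ∧ (a'⁻¹, b'⁻¹, b⁻¹, a⁻¹) ∈ R ∧
      (a', b⁻¹, b'⁻¹, a) ∈ R) ∧
    -- (4)
    (∀ a ∈ A, ∀ b ∈ B, (a, b, b⁻¹, a⁻¹) ∉ R) ∧
    -- (5)
    Set.BijOn (fun x : ((T₁ ≃g T₁) × (T₂ ≃g T₂)) × ((T₁ ≃g T₁) × (T₂ ≃g T₂)) ×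
      ((T₁ ≃g T₁) × (T₂ ≃g T₂)) × ((T₁ ≃g T₁) × (T₂ ≃g T₂)) =>
      (x.1, x.2.1)) R (A ×ˢ B) ∧
    Set.BijOn (fun x : ((T₁ ≃g T₁) × (T₂ ≃g T₂)) × ((T₁ ≃g T₁) × (T₂ ≃g T₂)) ×
      ((T₁ ≃g T₁) × (T₂ ≃g T₂)) × ((T₁ ≃g T₁) × (T₂ ≃g T₂)) =>
      (x.1, x.2.2.1)) R (A ×ˢ B) ∧
    Set.BijOn (fun x : ((T₁ ≃g T₁) × (T₂ ≃g T₂)) × ((T₁ ≃g T₁) × (T₂ ≃g T₂)) ×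
      ((T₁ ≃g T₁) × (T₂ ≃g T₂)) × ((T₁ ≃g T₁) × (T₂ ≃g T₂)) =>
      (x.2.2.2, x.2.1)) R (A ×ˢ B) ∧
    Set.BijOn (fun x : ((T₁ ≃g T₁) × (T₂ ≃g T₂)) × ((T₁ ≃g T₁) × (T₂ ≃g T₂)) ×
      ((T₁ ≃g T₁) × (T₂ ≃g T₂)) × ((T₁ ≃g T₁) × (T₂ ≃g T₂)) =>
      (x.2.2.2, x.2.2.1)) R (A ×ˢ B) ∧
    -- (6)
    Subgroup.closure (A ∪ B) = Γ := by
  have hconn₁ : T₁.Connected := h₁.isConnected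
  have hconn₂ : T₂.Connected := h₂.isConnected
  have hd₁ : ∀ (φ : T₁ ≃g T₁) (u w : V₁), T₁.dist (φ u) (φ w) = T₁.dist u w :=
    fun φ u w => auxIsoDist hconn₁ φ u w
  have hd₂ : ∀ (φ : T₂ ≃g T₂) (u w : V₂), T₂.dist (φ u) (φ w) = T₂.dist u w :=
    fun φ u w => auxIsoDist hconn₂ φ u w
  -- uniqueness from freeness
  have huniq : ∀ g h : (T₁ ≃g T₁) × (T₂ ≃g T₂), g ∈ Γ → h ∈ Γ →
      g.1 v₁ = h.1 v₁ → g.2 v₂ = h.2 v₂ → g = h := by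
    intro g h hg hh e1 e2
    have h1 : h⁻¹ * g = 1 := by
      apply hfree _ (mul_mem (inv_mem hh) hg)
      refine ⟨(v₁, v₂), ?_⟩
      have c1 : (h⁻¹ * g).1 v₁ = v₁ := by
        show (h.1)⁻¹ (g.1 v₁) = v₁
        rw [e1]; simp
      have c2 : (h⁻¹ * g).2 v₂ = v₂ := by
        show (h.2)⁻¹ (g.2 v₂) = v₂
        rw [e2]; simp
      exact Prod.ext c1 c2
    calc g = h * (h⁻¹ * g) := by group
      _ = h := by rw [h1, mul_one]
  have hexists : ∀ (u₁ : V₁) (u₂ : V₂), ∃ g, g ∈ Γ ∧ g.1 v₁ = u₁ ∧ g.2 v₂ = u₂ := by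
    intro u₁ u₂
    obtain ⟨g, hg, hgv⟩ := htrans (v₁, v₂) (u₁, u₂)
    exact ⟨g, hg, congrArg Prod.fst hgv, congrArg Prod.snd hgv⟩
  -- membership characterizations
  have hAmem : ∀ g, g ∈ A → g ∈ Γ ∧ T₁.dist v₁ (g.1 v₁) = 1 ∧ g.2 v₂ = v₂ := by
    intro g hg
    rw [hA] at hg
    exact ⟨hg.1, hg.2.1, (hconn₂.dist_eq_zero_iff.mp hg.2.2).symm⟩
  have hAmem' : ∀ g, g ∈ Γ → T₁.dist v₁ (g.1 v₁) = 1 → g.2 v₂ = v₂ → g ∈ A := by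
    intro g h1 h2 h3
    rw [hA]
    exact ⟨h1, h2, by rw [h3, SimpleGraph.dist_self]⟩
  have hBmem : ∀ g, g ∈ B → g ∈ Γ ∧ g.1 v₁ = v₁ ∧ T₂.dist v₂ (g.2 v₂) = 1 := by
    intro g hg
    rw [hB] at hg
    exact ⟨hg.1, (hconn₁.dist_eq_zero_iff.mp hg.2.1).symm, hg.2.2⟩
  have hBmem' : ∀ g, g ∈ Γ → g.1 v₁ = v₁ → T₂.dist v₂ (g.2 v₂) = 1 → g ∈ B := by
    intro g h1 h2 h3
    rw [hB]
    exact ⟨h1, by rw [h2, SimpleGraph.dist_self], h3⟩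
  -- distance helpers
  have hfixd₁ : ∀ (φ : T₁ ≃g T₁) (x : V₁), φ v₁ = v₁ → T₁.dist v₁ (φ x) = T₁.dist v₁ x := by
    intro φ x hfix
    calc T₁.dist v₁ (φ x) = T₁.dist (φ v₁) (φ x) := by rw [hfix]
      _ = T₁.dist v₁ x := hd₁ φ v₁ x
  have hfixd₂ : ∀ (φ : T₂ ≃g T₂) (x : V₂), φ v₂ = v₂ → T₂.dist v₂ (φ x) = T₂.dist v₂ x := by
    intro φ x hfix
    calc T₂.dist v₂ (φ x) = T₂.dist (φ v₂) (φ x) := by rw [hfix]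
      _ = T₂.dist v₂ x := hd₂ φ v₂ x
  have hinvd₁ : ∀ (φ : T₁ ≃g T₁), T₁.dist v₁ (φ⁻¹ v₁) = T₁.dist v₁ (φ v₁) := by
    intro φ
    calc T₁.dist v₁ (φ⁻¹ v₁) = T₁.dist (φ v₁) (φ (φ⁻¹ v₁)) := (hd₁ φ _ _).symm
      _ = T₁.dist (φ v₁) v₁ := by simp
      _ = T₁.dist v₁ (φ v₁) := SimpleGraph.dist_comm
  have hinvd₂ : ∀ (φ : T₂ ≃g T₂), T₂.dist v₂ (φ⁻¹ v₂) = T₂.dist v₂ (φ v₂) := by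
    intro φ
    calc T₂.dist v₂ (φ⁻¹ v₂) = T₂.dist (φ v₂) (φ (φ⁻¹ v₂)) := (hd₂ φ _ _).symm
      _ = T₂.dist (φ v₂) v₂ := by simp
      _ = T₂.dist v₂ (φ v₂) := SimpleGraph.dist_comm
  have hfixinv₁ : ∀ (φ : T₁ ≃g T₁), φ v₁ = v₁ → φ⁻¹ v₁ = v₁ := by
    intro φ h
    conv_lhs => rw [← h]
    simp
  have hfixinv₂ : ∀ (φ : T₂ ≃g T₂), φ v₂ = v₂ → φ⁻¹ v₂ = v₂ := by
    intro φ h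
    conv_lhs => rw [← h]
    simp
  -- (2) inverse closure
  have hAinv : ∀ g ∈ A, g⁻¹ ∈ A := by
    intro g hg
    obtain ⟨hgΓ, hg1, hg2⟩ := hAmem g hg
    refine hAmem' _ (inv_mem hgΓ) ?_ ?_
    · show T₁.dist v₁ ((g.1)⁻¹ v₁) = 1
      rw [hinvd₁ g.1]; exact hg1
    · show (g.2)⁻¹ v₂ = v₂
      exact hfixinv₂ g.2 hg2
  have hBinv : ∀ g ∈ B, g⁻¹ ∈ B := by
    intro g hg
    obtain ⟨hgΓ, hg1, hg2⟩ := hBmem g hg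
    refine hBmem' _ (inv_mem hgΓ) ?_ ?_
    · show (g.1)⁻¹ v₁ = v₁
      exact hfixinv₁ g.1 hg1
    · show T₂.dist v₂ ((g.2)⁻¹ v₂) = 1
      rw [hinvd₂ g.2]; exact hg2
  have hne1 : ∀ g ∈ A ∪ B, g ≠ 1 := by
    rintro g (hg | hg) h
    · obtain ⟨_, hg1, _⟩ := hAmem g hg
      rw [h] at hg1
      simp [SimpleGraph.dist_self] at hg1
    · obtain ⟨_, _, hg2⟩ := hBmem g hg
      rw [h] at hg2
      simp [SimpleGraph.dist_self] at hg2
  have hmemΓ : ∀ g ∈ A ∪ B, g ∈ Γ := by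
    rintro g (hg | hg)
    exacts [(hAmem g hg).1, (hBmem g hg).1]
  have hnotinv : ∀ g ∈ A ∪ B, g⁻¹ ≠ g := by
    intro g hg heq
    have hsq : g * g = 1 := by
      nth_rewrite 1 [← heq]
      group
    exact hne1 g hg (htorsionfree g (hmemΓ g hg)
      (isOfFinOrder_iff_pow_eq_one.mpr ⟨2, by norm_num, by rwa [pow_two]⟩))
  -- (1) cardinalities
  have hAcard : A.ncard = m := by
    have himg : (fun g : (T₁ ≃g T₁) × (T₂ ≃g T₂) => g.1 v₁) '' A = T₁.neighborSet v₁ := by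
      ext u
      constructor
      · rintro ⟨g, hg, rfl⟩
        obtain ⟨_, hg1, _⟩ := hAmem g hg
        exact SimpleGraph.dist_eq_one_iff_adj.mp hg1
      · intro hu
        obtain ⟨g, hgΓ, hg1, hg2⟩ := hexists u v₂
        exact ⟨g, hAmem' g hgΓ (by rw [hg1]; exact SimpleGraph.dist_eq_one_iff_adj.mpr hu)
          hg2, hg1⟩
    have hinj : Set.InjOn (fun g : (T₁ ≃g T₁) × (T₂ ≃g T₂) => g.1 v₁) A := by
      intro g hg h hh e
      obtain ⟨hgΓ, _, hg2⟩ := hAmem g hg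
      obtain ⟨hhΓ, _, hh2⟩ := hAmem h hh
      exact huniq g h hgΓ hhΓ e (by rw [hg2, hh2])
    rw [← Set.ncard_image_of_injOn hinj, himg, hdeg₁]
  have hBcard : B.ncard = n := by
    have himg : (fun g : (T₁ ≃g T₁) × (T₂ ≃g T₂) => g.2 v₂) '' B = T₂.neighborSet v₂ := by
      ext u
      constructor
      · rintro ⟨g, hg, rfl⟩
        obtain ⟨_, _, hg2⟩ := hBmem g hg
        exact SimpleGraph.dist_eq_one_iff_adj.mp hg2
      · intro hu
        obtain ⟨g, hgΓ, hg1, hg2⟩ := hexists v₁ u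
        exact ⟨g, hBmem' g hgΓ hg1 (by rw [hg2]; exact SimpleGraph.dist_eq_one_iff_adj.mpr hu),
          hg2⟩
    have hinj : Set.InjOn (fun g : (T₁ ≃g T₁) × (T₂ ≃g T₂) => g.2 v₂) B := by
      intro g hg h hh e
      obtain ⟨hgΓ, hg1, _⟩ := hBmem g hg
      obtain ⟨hhΓ, hh1, _⟩ := hBmem h hh
      exact huniq g h hgΓ hhΓ (by rw [hg1, hh1]) e
    rw [← Set.ncard_image_of_injOn hinj, himg, hdeg₂]
  have hEvenm : Even m := by
    rcases A.finite_or_infinite with hfin | hinf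
    · exact auxEvenNcard m A (·⁻¹) hfin hAcard hAinv (by intro a _; simp)
        (fun a ha => hnotinv a (Or.inl ha))
    · rw [← hAcard, hinf.ncard]
      exact Even.zero
  have hEvenn : Even n := by
    rcases B.finite_or_infinite with hfin | hinf
    · exact auxEvenNcard n B (·⁻¹) hfin hBcard hBinv (by intro a _; simp)
        (fun a ha => hnotinv a (Or.inr ha))
    · rw [← hBcard, hinf.ncard]
      exact Even.zero
  -- uniqueness of decompositions
  have huniqAB : ∀ a₁ ∈ A, ∀ b₁ ∈ B, ∀ a₂ ∈ A, ∀ b₂ ∈ B,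
      a₁ * b₁ = a₂ * b₂ → a₁ = a₂ ∧ b₁ = b₂ := by
    intro a₁ ha₁ b₁ hb₁ a₂ ha₂ b₂ hb₂ he
    obtain ⟨ha₁Γ, _, ha₁2⟩ := hAmem _ ha₁
    obtain ⟨ha₂Γ, _, ha₂2⟩ := hAmem _ ha₂
    obtain ⟨_, hb₁1, _⟩ := hBmem _ hb₁
    obtain ⟨_, hb₂1, _⟩ := hBmem _ hb₂
    have e1 : a₁.1 v₁ = a₂.1 v₁ := by
      have c1 : (a₁ * b₁).1 v₁ = a₁.1 v₁ := by
        show a₁.1 (b₁.1 v₁) = a₁.1 v₁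
        rw [hb₁1]
      have c2 : (a₂ * b₂).1 v₁ = a₂.1 v₁ := by
        show a₂.1 (b₂.1 v₁) = a₂.1 v₁
        rw [hb₂1]
      rw [← c1, ← c2, he]
    have ha : a₁ = a₂ := huniq _ _ ha₁Γ ha₂Γ e1 (by rw [ha₁2, ha₂2])
    refine ⟨ha, ?_⟩
    rw [ha] at he
    exact mul_left_cancel he
  have huniqBA : ∀ b₁ ∈ B, ∀ a₁ ∈ A, ∀ b₂ ∈ B, ∀ a₂ ∈ A,
      b₁ * a₁ = b₂ * a₂ → b₁ = b₂ ∧ a₁ = a₂ := by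
    intro b₁ hb₁ a₁ ha₁ b₂ hb₂ a₂ ha₂ he
    obtain ⟨hb₁Γ, hb₁1, _⟩ := hBmem _ hb₁
    obtain ⟨hb₂Γ, hb₂1, _⟩ := hBmem _ hb₂
    obtain ⟨_, _, ha₁2⟩ := hAmem _ ha₁
    obtain ⟨_, _, ha₂2⟩ := hAmem _ ha₂
    have e2 : b₁.2 v₂ = b₂.2 v₂ := by
      have c1 : (b₁ * a₁).2 v₂ = b₁.2 v₂ := by
        show b₁.2 (a₁.2 v₂) = b₁.2 v₂
        rw [ha₁2]
      have c2 : (b₂ * a₂).2 v₂ = b₂.2 v₂ := by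
        show b₂.2 (a₂.2 v₂) = b₂.2 v₂
        rw [ha₂2]
      rw [← c1, ← c2, he]
    have hb : b₁ = b₂ := huniq _ _ hb₁Γ hb₂Γ (by rw [hb₁1, hb₂1]) e2
    refine ⟨hb, ?_⟩
    rw [hb] at he
    exact mul_left_cancel he
  -- existence of decompositions
  have hexAB : ∀ g, g ∈ Γ → T₁.dist v₁ (g.1 v₁) = 1 → T₂.dist v₂ (g.2 v₂) = 1 →
      ∃ a ∈ A, ∃ b ∈ B, g = a * b := by
    intro g hgΓ hg1 hg2
    obtain ⟨a, haΓ, ha1, ha2⟩ := hexists (g.1 v₁) v₂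
    have haA : a ∈ A := hAmem' a haΓ (by rw [ha1]; exact hg1) ha2
    refine ⟨a, haA, a⁻¹ * g, ?_, by group⟩
    refine hBmem' _ (mul_mem (inv_mem haΓ) hgΓ) ?_ ?_
    · show (a.1)⁻¹ (g.1 v₁) = v₁
      rw [← ha1]; simp
    · show T₂.dist v₂ ((a.2)⁻¹ (g.2 v₂)) = 1
      calc T₂.dist v₂ ((a.2)⁻¹ (g.2 v₂))
          = T₂.dist (a.2 v₂) (a.2 ((a.2)⁻¹ (g.2 v₂))) := (hd₂ _ _ _).symm
        _ = T₂.dist (a.2 v₂) (g.2 v₂) := by simp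
        _ = 1 := by rw [ha2]; exact hg2
  have hexBA : ∀ g, g ∈ Γ → T₁.dist v₁ (g.1 v₁) = 1 → T₂.dist v₂ (g.2 v₂) = 1 →
      ∃ b ∈ B, ∃ a ∈ A, g = b * a := by
    intro g hgΓ hg1 hg2
    obtain ⟨b, hbΓ, hb1, hb2⟩ := hexists v₁ (g.2 v₂)
    have hbB : b ∈ B := hBmem' b hbΓ hb1 (by rw [hb2]; exact hg2)
    refine ⟨b, hbB, b⁻¹ * g, ?_, by group⟩
    refine hAmem' _ (mul_mem (inv_mem hbΓ) hgΓ) ?_ ?_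
    · show T₁.dist v₁ ((b.1)⁻¹ (g.1 v₁)) = 1
      calc T₁.dist v₁ ((b.1)⁻¹ (g.1 v₁))
          = T₁.dist (b.1 v₁) (b.1 ((b.1)⁻¹ (g.1 v₁))) := (hd₁ _ _ _).symm
        _ = T₁.dist v₁ (g.1 v₁) := by simp [hb1]
        _ = 1 := hg1
    · show (b.2)⁻¹ (g.2 v₂) = v₂
      rw [← hb2]; simp
  -- shape of products
  have shAB : ∀ a ∈ A, ∀ b ∈ B,
      T₁.dist v₁ ((a * b).1 v₁) = 1 ∧ T₂.dist v₂ ((a * b).2 v₂) = 1 := by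
    intro a ha b hb
    obtain ⟨_, ha1, ha2⟩ := hAmem _ ha
    obtain ⟨_, hb1, hb2⟩ := hBmem _ hb
    constructor
    · show T₁.dist v₁ (a.1 (b.1 v₁)) = 1
      rw [hb1]; exact ha1
    · show T₂.dist v₂ (a.2 (b.2 v₂)) = 1
      rw [hfixd₂ a.2 _ ha2]; exact hb2
  have shBA : ∀ b ∈ B, ∀ a ∈ A,
      T₁.dist v₁ ((b * a).1 v₁) = 1 ∧ T₂.dist v₂ ((b * a).2 v₂) = 1 := by
    intro b hb a ha
    obtain ⟨_, ha1, ha2⟩ := hAmem _ ha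
    obtain ⟨_, hb1, hb2⟩ := hBmem _ hb
    constructor
    · show T₁.dist v₁ (b.1 (a.1 v₁)) = 1
      rw [hfixd₁ b.1 _ hb1]; exact ha1
    · show T₂.dist v₂ (b.2 (a.2 v₂)) = 1
      rw [ha2]; exact hb2
  -- (3)
  have part3 : ∀ a b b' a', (a, b, b', a') ∈ R →
      (a⁻¹, b', b, a'⁻¹) ∈ R ∧ (a'⁻¹, b'⁻¹, b⁻¹, a⁻¹) ∈ R ∧ (a', b⁻¹, b'⁻¹, a) ∈ R := by
    intro a b b' a' hx
    rw [hR] at hx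
    obtain ⟨ha, hb, hb', ha', he⟩ := hx
    have hbeq : b' = a * b * a'⁻¹ := eq_mul_inv_iff_mul_eq.mpr he.symm
    rw [hR]
    refine ⟨⟨hAinv a ha, hb', hb, hAinv a' ha', by rw [hbeq]; group⟩,
      ⟨hAinv a' ha', hBinv b' hb', hBinv b hb, hAinv a ha, by rw [hbeq]; group⟩,
      ⟨ha', hBinv b hb, hBinv b' hb', ha, by rw [hbeq]; group⟩⟩
  -- (4)
  have part4 : ∀ a ∈ A, ∀ b ∈ B, (a, b, b⁻¹, a⁻¹) ∉ R := by
    intro a ha b hb hx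
    rw [hR] at hx
    obtain ⟨_, _, _, _, he⟩ := hx
    obtain ⟨haΓ, _, ha2⟩ := hAmem _ ha
    obtain ⟨hbΓ, _, hb2⟩ := hBmem _ hb
    have hsq : (a * b) * (a * b) = 1 := by
      nth_rewrite 2 [he]
      group
    have hne : a * b ≠ 1 := by
      intro h
      have hb' : a⁻¹ = b := mul_eq_one_iff_inv_eq.mp h
      have : b.2 v₂ = v₂ := by
        rw [← hb']
        exact hfixinv₂ a.2 ha2
      rw [this, SimpleGraph.dist_self] at hb2
      exact zero_ne_one hb2
    exact hne (htorsionfree _ (mul_mem haΓ hbΓ)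
      (isOfFinOrder_iff_pow_eq_one.mpr ⟨2, by norm_num, by rwa [pow_two]⟩))
  -- (5)
  have bij1 : Set.BijOn (fun x : ((T₁ ≃g T₁) × (T₂ ≃g T₂)) × ((T₁ ≃g T₁) × (T₂ ≃g T₂)) ×
      ((T₁ ≃g T₁) × (T₂ ≃g T₂)) × ((T₁ ≃g T₁) × (T₂ ≃g T₂)) =>
      (x.1, x.2.1)) R (A ×ˢ B) := by
    refine ⟨?_, ?_, ?_⟩
    · intro x hx
      rw [hR] at hx
      exact ⟨hx.1, hx.2.1⟩
    · intro x hx y hy he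
      rw [hR] at hx hy
      obtain ⟨hx1, hx2, hx3, hx4, hxe⟩ := hx
      obtain ⟨hy1, hy2, hy3, hy4, hye⟩ := hy
      obtain ⟨e1', e2'⟩ := Prod.ext_iff.mp he
      have e1 : x.1 = y.1 := e1'
      have e2 : x.2.1 = y.2.1 := e2'
      have e3 : x.2.2.1 * x.2.2.2 = y.2.2.1 * y.2.2.2 := by
        rw [← hxe, ← hye, e1, e2]
      obtain ⟨f1, f2⟩ := huniqBA _ hx3 _ hx4 _ hy3 _ hy4 e3
      exact Prod.ext e1 (Prod.ext e2 (Prod.ext f1 f2))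
    · intro p hp
      obtain ⟨hpA, hpB⟩ := hp
      obtain ⟨s1, s2⟩ := shAB _ hpA _ hpB
      obtain ⟨b', hb', a', ha', hg⟩ :=
        hexBA (p.1 * p.2) (mul_mem (hAmem _ hpA).1 (hBmem _ hpB).1) s1 s2
      refine ⟨(p.1, p.2, b', a'), ?_, rfl⟩
      rw [hR]
      exact ⟨hpA, hpB, hb', ha', hg⟩
  have bij2 : Set.BijOn (fun x : ((T₁ ≃g T₁) × (T₂ ≃g T₂)) × ((T₁ ≃g T₁) × (T₂ ≃g T₂)) ×
      ((T₁ ≃g T₁) × (T₂ ≃g T₂)) × ((T₁ ≃g T₁) × (T₂ ≃g T₂)) =>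
      (x.1, x.2.2.1)) R (A ×ˢ B) := by
    refine ⟨?_, ?_, ?_⟩
    · intro x hx
      rw [hR] at hx
      exact ⟨hx.1, hx.2.2.1⟩
    · intro x hx y hy he
      rw [hR] at hx hy
      obtain ⟨hx1, hx2, hx3, hx4, hxe⟩ := hx
      obtain ⟨hy1, hy2, hy3, hy4, hye⟩ := hy
      obtain ⟨e1', e2'⟩ := Prod.ext_iff.mp he
      have e1 : x.1 = y.1 := e1'
      have e2 : x.2.2.1 = y.2.2.1 := e2'
      have dx : x.2.1 * x.2.2.2⁻¹ = x.1⁻¹ * x.2.2.1 := by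
        have h0 : x.2.1 * x.2.2.2⁻¹ = x.1⁻¹ * (x.1 * x.2.1) * x.2.2.2⁻¹ := by group
        rw [hxe] at h0
        rw [h0]; group
      have dy : y.2.1 * y.2.2.2⁻¹ = y.1⁻¹ * y.2.2.1 := by
        have h0 : y.2.1 * y.2.2.2⁻¹ = y.1⁻¹ * (y.1 * y.2.1) * y.2.2.2⁻¹ := by group
        rw [hye] at h0
        rw [h0]; group
      have e3 : x.2.1 * x.2.2.2⁻¹ = y.2.1 * y.2.2.2⁻¹ := by
        rw [dx, dy, e1, e2]
      obtain ⟨f1, f2⟩ := huniqBA _ hx2 _ (hAinv _ hx4) _ hy2 _ (hAinv _ hy4) e3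
      exact Prod.ext e1 (Prod.ext f1 (Prod.ext e2 (inv_injective f2)))
    · intro p hp
      obtain ⟨hpA, hpB⟩ := hp
      obtain ⟨s1, s2⟩ := shAB _ (hAinv _ hpA) _ hpB
      obtain ⟨b, hb, c, hc, hg⟩ :=
        hexBA (p.1⁻¹ * p.2) (mul_mem (inv_mem (hAmem _ hpA).1) (hBmem _ hpB).1) s1 s2
      refine ⟨(p.1, b, p.2, c⁻¹), ?_, rfl⟩
      rw [hR]
      refine ⟨hpA, hb, hpB, hAinv _ hc, ?_⟩
      show p.1 * b = p.2 * c⁻¹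
      have hp2 : p.2 = p.1 * (b * c) := by
        rw [← hg]; group
      rw [hp2]; group
  have bij3 : Set.BijOn (fun x : ((T₁ ≃g T₁) × (T₂ ≃g T₂)) × ((T₁ ≃g T₁) × (T₂ ≃g T₂)) ×
      ((T₁ ≃g T₁) × (T₂ ≃g T₂)) × ((T₁ ≃g T₁) × (T₂ ≃g T₂)) =>
      (x.2.2.2, x.2.1)) R (A ×ˢ B) := by
    refine ⟨?_, ?_, ?_⟩
    · intro x hx
      rw [hR] at hx
      exact ⟨hx.2.2.2.1, hx.2.1⟩
    · intro x hx y hy he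
      rw [hR] at hx hy
      obtain ⟨hx1, hx2, hx3, hx4, hxe⟩ := hx
      obtain ⟨hy1, hy2, hy3, hy4, hye⟩ := hy
      obtain ⟨e1', e2'⟩ := Prod.ext_iff.mp he
      have e1 : x.2.2.2 = y.2.2.2 := e1'
      have e2 : x.2.1 = y.2.1 := e2'
      have dx : x.2.2.1⁻¹ * x.1 = x.2.2.2 * x.2.1⁻¹ := by
        have h0 : x.2.2.1⁻¹ * (x.1 * x.2.1) * x.2.1⁻¹ = x.2.2.1⁻¹ * x.1 := by group
        rw [hxe] at h0
        rw [← h0]; group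
      have dy : y.2.2.1⁻¹ * y.1 = y.2.2.2 * y.2.1⁻¹ := by
        have h0 : y.2.2.1⁻¹ * (y.1 * y.2.1) * y.2.1⁻¹ = y.2.2.1⁻¹ * y.1 := by group
        rw [hye] at h0
        rw [← h0]; group
      have e3 : x.2.2.1⁻¹ * x.1 = y.2.2.1⁻¹ * y.1 := by
        rw [dx, dy, e1, e2]
      obtain ⟨f1, f2⟩ := huniqBA _ (hBinv _ hx3) _ hx1 _ (hBinv _ hy3) _ hy1 e3
      exact Prod.ext f2 (Prod.ext e2 (Prod.ext (inv_injective f1) e1))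
    · intro p hp
      obtain ⟨hpA, hpB⟩ := hp
      obtain ⟨s1, s2⟩ := shAB _ hpA _ (hBinv _ hpB)
      obtain ⟨bb, hbb, c, hc, hg⟩ :=
        hexBA (p.1 * p.2⁻¹) (mul_mem (hAmem _ hpA).1 (inv_mem (hBmem _ hpB).1)) s1 s2
      refine ⟨(c, p.2, bb⁻¹, p.1), ?_, rfl⟩
      rw [hR]
      refine ⟨hc, hpB, hBinv _ hbb, hpA, ?_⟩
      show c * p.2 = bb⁻¹ * p.1
      have hp1 : p.1 = bb * c * p.2 := by
        rw [← hg]; group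
      rw [hp1]; group
  have bij4 : Set.BijOn (fun x : ((T₁ ≃g T₁) × (T₂ ≃g T₂)) × ((T₁ ≃g T₁) × (T₂ ≃g T₂)) ×
      ((T₁ ≃g T₁) × (T₂ ≃g T₂)) × ((T₁ ≃g T₁) × (T₂ ≃g T₂)) =>
      (x.2.2.2, x.2.2.1)) R (A ×ˢ B) := by
    refine ⟨?_, ?_, ?_⟩
    · intro x hx
      rw [hR] at hx
      exact ⟨hx.2.2.2.1, hx.2.2.1⟩
    · intro x hx y hy he
      rw [hR] at hx hy
      obtain ⟨hx1, hx2, hx3, hx4, hxe⟩ := hx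
      obtain ⟨hy1, hy2, hy3, hy4, hye⟩ := hy
      obtain ⟨e1', e2'⟩ := Prod.ext_iff.mp he
      have e1 : x.2.2.2 = y.2.2.2 := e1'
      have e2 : x.2.2.1 = y.2.2.1 := e2'
      have e3 : x.1 * x.2.1 = y.1 * y.2.1 := by
        rw [hxe, hye, e1, e2]
      obtain ⟨f1, f2⟩ := huniqAB _ hx1 _ hx2 _ hy1 _ hy2 e3
      exact Prod.ext f1 (Prod.ext f2 (Prod.ext e2 e1))
    · intro p hp
      obtain ⟨hpA, hpB⟩ := hp
      obtain ⟨s1, s2⟩ := shBA _ hpB _ hpA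
      obtain ⟨a, ha, b, hb, hg⟩ :=
        hexAB (p.2 * p.1) (mul_mem (hBmem _ hpB).1 (hAmem _ hpA).1) s1 s2
      refine ⟨(a, b, p.2, p.1), ?_, rfl⟩
      rw [hR]
      exact ⟨ha, hb, hpB, hpA, hg.symm⟩
  -- (6)
  have hle : Subgroup.closure (A ∪ B) ≤ Γ := (Subgroup.closure_le Γ).mpr hmemΓ
  have hmain : ∀ d : ℕ, ∀ g, g ∈ Γ →
      T₁.dist v₁ (g.1 v₁) + T₂.dist v₂ (g.2 v₂) = d → g ∈ Subgroup.closure (A ∪ B) := by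
    intro d
    induction d using Nat.strong_induction_on with
    | _ d ih =>
      intro g hgΓ hd
      rcases Nat.eq_zero_or_pos d with h0 | hpos
      · have e1 : T₁.dist v₁ (g.1 v₁) = 0 := by omega
        have e2 : T₂.dist v₂ (g.2 v₂) = 0 := by omega
        have hg1 : g = 1 := by
          apply hfree g hgΓ
          refine ⟨(v₁, v₂), ?_⟩
          exact Prod.ext (hconn₁.dist_eq_zero_iff.mp e1).symm
            (hconn₂.dist_eq_zero_iff.mp e2).symm
        rw [hg1]
        exact one_mem _
      rcases Nat.eq_zero_or_pos (T₂.dist v₂ (g.2 v₂)) with hz2 | hp2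
      · -- first distance is positive; peel off an element of A
        have hp1 : 0 < T₁.dist v₁ (g.1 v₁) := by omega
        obtain ⟨q, hq⟩ := hconn₁.exists_walk_length_eq_dist (g.1 v₁) v₁
        have hnp : ¬ q.Nil := by
          rw [SimpleGraph.Walk.not_nil_iff_lt_length, hq, SimpleGraph.dist_comm]
          omega
        set x : V₁ := q.getVert 1 with hxdef
        have hadj : T₁.Adj (g.1 v₁) x := SimpleGraph.Walk.adj_snd hnp
        have hql : q.tail.length + 1 = q.length := SimpleGraph.Walk.length_tail_add_one hnp
        have hdx : T₁.dist v₁ x ≤ q.tail.length := by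
          rw [SimpleGraph.dist_comm]
          exact SimpleGraph.dist_le q.tail
        obtain ⟨h', hh'Γ, hh'1, hh'2⟩ := hexists x (g.2 v₂)
        have haA : h'⁻¹ * g ∈ A := by
          refine hAmem' _ (mul_mem (inv_mem hh'Γ) hgΓ) ?_ ?_
          · show T₁.dist v₁ ((h'.1)⁻¹ (g.1 v₁)) = 1
            calc T₁.dist v₁ ((h'.1)⁻¹ (g.1 v₁))
                = T₁.dist (h'.1 v₁) (h'.1 ((h'.1)⁻¹ (g.1 v₁))) := (hd₁ _ _ _).symm
              _ = T₁.dist x (g.1 v₁) := by rw [hh'1]; simp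
              _ = 1 := SimpleGraph.dist_eq_one_iff_adj.mpr hadj.symm
          · show (h'.2)⁻¹ (g.2 v₂) = v₂
            rw [← hh'2]; simp
        have hlt : T₁.dist v₁ (h'.1 v₁) + T₂.dist v₂ (h'.2 v₂) < d := by
          rw [hh'1, hh'2]
          have hcm : T₁.dist (g.1 v₁) v₁ = T₁.dist v₁ (g.1 v₁) :=
            SimpleGraph.dist_comm
          omega
        have hh'cl := ih _ hlt h' hh'Γ rfl
        have hgdec : g = h' * (h'⁻¹ * g) := by group
        rw [hgdec]
        exact mul_mem hh'cl (Subgroup.subset_closure (Or.inl haA))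
      · -- second distance is positive; peel off an element of B
        obtain ⟨q, hq⟩ := hconn₂.exists_walk_length_eq_dist (g.2 v₂) v₂
        have hnp : ¬ q.Nil := by
          rw [SimpleGraph.Walk.not_nil_iff_lt_length, hq, SimpleGraph.dist_comm]
          omega
        set x : V₂ := q.getVert 1 with hxdef
        have hadj : T₂.Adj (g.2 v₂) x := SimpleGraph.Walk.adj_snd hnp
        have hql : q.tail.length + 1 = q.length := SimpleGraph.Walk.length_tail_add_one hnp
        have hdx : T₂.dist v₂ x ≤ q.tail.length := by
          rw [SimpleGraph.dist_comm]
          exact SimpleGraph.dist_le q.tail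
        obtain ⟨h', hh'Γ, hh'1, hh'2⟩ := hexists (g.1 v₁) x
        have hbB : h'⁻¹ * g ∈ B := by
          refine hBmem' _ (mul_mem (inv_mem hh'Γ) hgΓ) ?_ ?_
          · show (h'.1)⁻¹ (g.1 v₁) = v₁
            rw [← hh'1]; simp
          · show T₂.dist v₂ ((h'.2)⁻¹ (g.2 v₂)) = 1
            calc T₂.dist v₂ ((h'.2)⁻¹ (g.2 v₂))
                = T₂.dist (h'.2 v₂) (h'.2 ((h'.2)⁻¹ (g.2 v₂))) := (hd₂ _ _ _).symm
              _ = T₂.dist x (g.2 v₂) := by rw [hh'2]; simp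
              _ = 1 := SimpleGraph.dist_eq_one_iff_adj.mpr hadj.symm
        have hlt : T₁.dist v₁ (h'.1 v₁) + T₂.dist v₂ (h'.2 v₂) < d := by
          rw [hh'1, hh'2]
          have hcm : T₂.dist (g.2 v₂) v₂ = T₂.dist v₂ (g.2 v₂) :=
            SimpleGraph.dist_comm
          omega
        have hh'cl := ih _ hlt h' hh'Γ rfl
        have hgdec : g = h' * (h'⁻¹ * g) := by group
        rw [hgdec]
        exact mul_mem hh'cl (Subgroup.subset_closure (Or.inr hbB))
  have hgen : Subgroup.closure (A ∪ B) = Γ :=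
    le_antisymm hle (fun g hg => hmain _ g hg rfl)
  exact ⟨hAcard, hBcard, hAinv, hBinv, hnotinv, hEvenm, hEvenn, part3, part4,
    bij1, bij2, bij3, bij4, hgen⟩
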